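/- arXiv:2107.04368 — 7 statements merged into one kernel-verified Lean document; each statement's English description precedes it below -/
import Mathlib

section
/- Let G=(W,E) be a simple undirected graph with W={w_1,…,w_{3q}}, let (N,V) be the instance of 3D-SR-AS-BIN constructed from G by the reduction, and let M be a stable matching in (N,V) with |M| = |N|/3. Then for every 1 ≤ i ≤ 3q, the triple M(b_i) equals {b_i, b_j, b_k} for some 1 ≤ j,k ≤ 3q with {w_i,w_j} ∈ E and {w_i,w_k} ∈ E. -/
open Finset

variable {A : Type*}

/-- `M` is a matching on agent set `N`: a set of pairwise disjoint triples of agents of `N`. -/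
def IsMatching [DecidableEq A] (N : Finset A) (M : Finset (Finset A)) : Prop :=
  (∀ t ∈ M, t.card = 3 ∧ t ⊆ N) ∧ ∀ t ∈ M, ∀ s ∈ M, t ≠ s → Disjoint t s

/-- The (additively separable) utility of agent `a` in matching `M` under valuations `val`:
the sum, over the triples of `M` containing `a`, of the valuations by `a` of the other
members; this is `0` if `a` is unmatched, and for a genuine matching it is the sum of the
valuations of `a`'s two partners. -/
def utility [DecidableEq A] (val : A → A → ℤ) (M : Finset (Finset A)) (a : A) : ℤ :=
  ∑ t ∈ M.filter (fun t => a ∈ t), ∑ b ∈ t.erase a, val a b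

/-- The triple consisting of the three distinct agents `x, y, z` of `N` blocks `M`. -/
def Blocks [DecidableEq A] (N : Finset A) (val : A → A → ℤ) (M : Finset (Finset A))
    (x y z : A) : Prop :=
  x ∈ N ∧ y ∈ N ∧ z ∈ N ∧ x ≠ y ∧ x ≠ z ∧ y ≠ z ∧
  utility val M x < val x y + val x z ∧
  utility val M y < val y x + val y z ∧
  utility val M z < val z x + val z y

/-- `M` is stable: no triple of agents of `N` blocks it. -/
def IsStable [DecidableEq A] (N : Finset A) (val : A → A → ℤ) (M : Finset (Finset A)) : Prop :=
  ∀ x y z : A, ¬ Blocks N val M x y z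

/-- Binary symmetric preferences on `N`. -/
def BinSym [DecidableEq A] (N : Finset A) (val : A → A → ℤ) : Prop :=
  (∀ a ∈ N, ∀ b ∈ N, a ≠ b → val a b = 0 ∨ val a b = 1) ∧
  (∀ a ∈ N, ∀ b ∈ N, val a b = val b a)

/-- A `P`-matching: a matching in which every matched agent has strictly positive utility. -/
def IsPMatching [DecidableEq A] (N : Finset A) (val : A → A → ℤ)
    (M : Finset (Finset A)) : Prop :=
  IsMatching N M ∧ ∀ a : A, (∃ t ∈ M, a ∈ t) → 0 < utility val M a

/-- `x, y, z` form a triangle: three distinct agents of `N` whose pairwise valuations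
all equal `1`. -/
def IsTriangle [DecidableEq A] (N : Finset A) (val : A → A → ℤ) (x y z : A) : Prop :=
  x ∈ N ∧ y ∈ N ∧ z ∈ N ∧ x ≠ y ∧ x ≠ z ∧ y ≠ z ∧
  val x y = 1 ∧ val y z = 1 ∧ val x z = 1

/-- The instance contains no triangle. -/
def TriangleFree [DecidableEq A] (N : Finset A) (val : A → A → ℤ) : Prop :=
  ∀ x y z : A, ¬ IsTriangle N val x y z

open Finset

/-- The agents of the instance constructed by the reduction from
Partition Into Triangles: `a i s` (for `s : Fin 2`), `b i` for each vertex `i`,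
and pentagadget agents `p r t` (`t : Fin 5`, representing `p_r^{t+1}`). -/
inductive Agent (q : ℕ) : Type where
  | a : Fin (3*q) → Fin 2 → Agent q
  | b : Fin (3*q) → Agent q
  | p : Fin (6*q) → Fin 5 → Agent q
  deriving DecidableEq, Fintype

/-- The valuation function of the instance constructed by the reduction from the graph `G`.
Note that, within a pentagadget, `p_r^t` assigns valuation `1` exactly to
`p_r^{t+1}, p_r^{t+2}, p_r^{t+4}` (indices mod 5). -/
def redVal (q : ℕ) (G : SimpleGraph (Fin (3*q))) [DecidableRel G.Adj] :
    Agent q → Agent q → ℤ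
  | .a i s, .a j s' => if i = j ∧ s ≠ s' then 1 else 0
  | .a i _, .b j => if i = j then 1 else 0
  | .b i, .a j _ => if i = j then 1 else 0
  | .b i, .b j => if G.Adj i j then 1 else 0
  | .p r t, .p r' t' => if r = r' ∧ (t' - t = 1 ∨ t' - t = 2 ∨ t' - t = 4) then 1 else 0
  | _, _ => 0

/-- A partition of the vertices of `G` into triangles. -/
def IsTrianglePartition {n : ℕ} (G : SimpleGraph (Fin n))
    (X : Finset (Finset (Fin n))) : Prop :=
  (∀ t ∈ X, t.card = 3 ∧ ∀ u ∈ t, ∀ v ∈ t, u ≠ v → G.Adj u v) ∧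
  (∀ t ∈ X, ∀ s ∈ X, t ≠ s → Disjoint t s) ∧
  ∀ v : Fin n, ∃ t ∈ X, v ∈ t


namespace BRed
open Finset

private def agentEquiv (q : ℕ) :
    Agent q ≃ (Fin (3*q) × Fin 2) ⊕ Fin (3*q) ⊕ (Fin (6*q) × Fin 5) where
  toFun := fun x => match x with
    | .a i s => .inl (i, s)
    | .b i => .inr (.inl i)
    | .p r t => .inr (.inr (r, t))
  invFun := fun x => match x with
    | .inl (i, s) => .a i s
    | .inr (.inl i) => .b i
    | .inr (.inr (r, t)) => .p r t
  left_inv := by rintro (⟨i,s⟩|i|⟨r,t⟩) <;> rfl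
  right_inv := by rintro (⟨i,s⟩|i|⟨r,t⟩) <;> rfl

private lemma card_agent (q : ℕ) : Fintype.card (Agent q) = 39 * q := by
  rw [Fintype.card_congr (agentEquiv q)]
  simp only [Fintype.card_sum, Fintype.card_prod, Fintype.card_fin]
  ring

variable {q : ℕ} {G : SimpleGraph (Fin (3*q))} [DecidableRel G.Adj]
  {M : Finset (Finset (Agent q))}

private lemma triple_eq (hM : IsMatching (univ : Finset (Agent q)) M)
    {t s : Finset (Agent q)} {a : Agent q} (ht : t ∈ M) (hs : s ∈ M)
    (hat : a ∈ t) (has : a ∈ s) : t = s := by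
  by_contra h
  exact (Finset.disjoint_left.mp (hM.2 t ht s hs h)) hat has

private lemma covers (hM : IsMatching (univ : Finset (Agent q)) M)
    (hcard : M.card = 13 * q) : ∀ a : Agent q, ∃ t ∈ M, a ∈ t := by
  have hsub : M.biUnion (fun t => t) ⊆ univ := fun x _ => mem_univ x
  have hcards : (M.biUnion (fun t => t)).card = 39 * q := by
    rw [Finset.card_biUnion (fun t ht s hs hne => hM.2 t ht s hs hne)]
    have : ∀ t ∈ M, t.card = 3 := fun t ht => (hM.1 t ht).1
    rw [Finset.sum_congr rfl this, Finset.sum_const, hcard, smul_eq_mul]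
    ring
  have huniv : M.biUnion (fun t => t) = univ := by
    apply Finset.eq_of_subset_of_card_le hsub
    rw [hcards, Finset.card_univ, card_agent]
  intro a
  have : a ∈ M.biUnion (fun t => t) := huniv ▸ mem_univ a
  simpa using this

private lemma rep (hM : IsMatching (univ : Finset (Agent q)) M)
    (hcov : ∀ a : Agent q, ∃ t ∈ M, a ∈ t) (a : Agent q) :
    ∃ t m₁ m₂, t ∈ M ∧ a ∈ t ∧ (∀ s ∈ M, a ∈ s → s = t) ∧
      m₁ ≠ m₂ ∧ a ≠ m₁ ∧ a ≠ m₂ ∧ t = {a, m₁, m₂} ∧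
      utility (redVal q G) M a = redVal q G a m₁ + redVal q G a m₂ := by
  obtain ⟨t, ht, hat⟩ := hcov a
  have h3 : t.card = 3 := (hM.1 t ht).1
  have h2 : (t.erase a).card = 2 := by rw [Finset.card_erase_of_mem hat, h3]
  obtain ⟨m₁, m₂, hne, he⟩ := Finset.card_eq_two.mp h2
  have huniq : ∀ s ∈ M, a ∈ s → s = t := fun s hs has => triple_eq hM hs ht has hat
  have hm₁ : m₁ ∈ t.erase a := he ▸ mem_insert_self _ _
  have hm₂ : m₂ ∈ t.erase a := he ▸ mem_insert_of_mem (mem_singleton_self _)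
  have hteq : t = {a, m₁, m₂} := by
    rw [show ({a, m₁, m₂} : Finset (Agent q)) = insert a {m₁, m₂} from rfl, ← he,
      Finset.insert_erase hat]
  have hfil : M.filter (fun s => a ∈ s) = {t} := by
    ext s
    simp only [mem_filter, mem_singleton]
    constructor
    · rintro ⟨hs, has⟩; exact huniq s hs has
    · rintro rfl; exact ⟨ht, hat⟩
  refine ⟨t, m₁, m₂, ht, hat, huniq, hne, (Finset.mem_erase.mp hm₁).1.symm,
    (Finset.mem_erase.mp hm₂).1.symm, hteq, ?_⟩
  rw [utility, hfil, Finset.sum_singleton, he, Finset.sum_pair hne]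

private lemma redVal01 (x y : Agent q) : redVal q G x y = 0 ∨ redVal q G x y = 1 := by
  cases x <;> cases y <;> simp [redVal] <;> tauto

end BRed
namespace BRed
open Finset
variable {q : ℕ} {G : SimpleGraph (Fin (3*q))} [DecidableRel G.Adj]
  {M : Finset (Finset (Agent q))}

private lemma addmod (z : Fin 5) {c d e : Fin 5} (h : c + d = e) : z + c + d = z + e := by
  rw [add_assoc, h]

private lemma redVal_pp (r : Fin (6*q)) (x c : Fin 5) :
    redVal q G (Agent.p r x) (Agent.p r (x + c)) =
      if c = 1 ∨ c = 2 ∨ c = 4 then 1 else 0 := by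
  simp [redVal, add_sub_cancel_left]

private lemma redVal_pcc (r : Fin (6*q)) (z : Fin 5) (c d : Fin 5) :
    redVal q G (Agent.p r (z + c)) (Agent.p r (z + d)) =
      if d - c = 1 ∨ d - c = 2 ∨ d - c = 4 then 1 else 0 := by
  simp [redVal, add_sub_add_left_eq_sub]

private lemma redVal_pc0 (r : Fin (6*q)) (z c : Fin 5) :
    redVal q G (Agent.p r (z + c)) (Agent.p r z) =
      if -c = 1 ∨ -c = 2 ∨ -c = 4 then 1 else 0 := by
  simp [redVal, sub_add_cancel_left]

private lemma redVal_p_char (r : Fin (6*q)) (x : Fin 5) (m : Agent q)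
    (h : redVal q G (Agent.p r x) m = 1) :
    m = Agent.p r (x+1) ∨ m = Agent.p r (x+2) ∨ m = Agent.p r (x+4) := by
  rcases m with ⟨i, s⟩ | i | ⟨r', t'⟩
  · simp [redVal] at h
  · simp [redVal] at h
  · rw [redVal] at h
    split_ifs at h with hc
    · obtain ⟨rfl, hc⟩ := hc
      rcases hc with h1 | h2 | h4
      · left; rw [sub_eq_iff_eq_add.mp h1, add_comm]
      · right; left; rw [sub_eq_iff_eq_add.mp h2, add_comm]
      · right; right; rw [sub_eq_iff_eq_add.mp h4, add_comm]
    · cases h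

private lemma redVal_a_char (i : Fin (3*q)) (s : Fin 2) (m : Agent q)
    (h : redVal q G (Agent.a i s) m = 1) :
    m = Agent.a i (s+1) ∨ m = Agent.b i := by
  rcases m with ⟨j, s'⟩ | j | ⟨r, t⟩
  · left
    rw [redVal] at h
    split_ifs at h with hc
    · obtain ⟨rfl, hs⟩ := hc
      have : s' = s + 1 := by revert hs; revert s s'; decide
      rw [this]
    · cases h
  · right
    rw [redVal] at h
    split_ifs at h with hc
    · rw [hc]
    · cases h
  · simp [redVal] at h

private lemma redVal_b_char (i : Fin (3*q)) (m : Agent q)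
    (h : redVal q G (Agent.b i) m = 1) :
    (∃ s, m = Agent.a i s) ∨ ∃ j, G.Adj i j ∧ m = Agent.b j := by
  rcases m with ⟨j, s'⟩ | j | ⟨r, t⟩
  · left
    rw [redVal] at h
    split_ifs at h with hc
    · exact ⟨s', by rw [hc]⟩
    · cases h
  · right
    rw [redVal] at h
    split_ifs at h with hc
    · exact ⟨j, hc, rfl⟩
    · cases h
  · simp [redVal] at h

private lemma redVal_aa (i : Fin (3*q)) (s : Fin 2) :
    redVal q G (Agent.a i s) (Agent.a i (s+1)) = 1 := by
  rw [redVal, if_pos ⟨rfl, by revert s; decide⟩]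

private lemma redVal_ab (i : Fin (3*q)) (s : Fin 2) :
    redVal q G (Agent.a i s) (Agent.b i) = 1 := by
  rw [redVal, if_pos rfl]

private lemma redVal_ba (i : Fin (3*q)) (s : Fin 2) :
    redVal q G (Agent.b i) (Agent.a i s) = 1 := by
  rw [redVal, if_pos rfl]

private lemma redVal_ap (i : Fin (3*q)) (s : Fin 2) (r : Fin (6*q)) (x : Fin 5) :
    redVal q G (Agent.a i s) (Agent.p r x) = 0 := rfl

private lemma redVal_bp (i : Fin (3*q)) (r : Fin (6*q)) (x : Fin 5) :
    redVal q G (Agent.b i) (Agent.p r x) = 0 := rfl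

private lemma redVal_bb (i j : Fin (3*q)) (h : redVal q G (Agent.b i) (Agent.b j) = 1) :
    G.Adj i j := by
  rw [redVal] at h
  split_ifs at h with hc
  · exact hc
  · cases h

private lemma not_blocks (hstable : IsStable (univ : Finset (Agent q)) (redVal q G) M)
    {x y z : Agent q} (hxy : x ≠ y) (hxz : x ≠ z) (hyz : y ≠ z) :
    redVal q G x y + redVal q G x z ≤ utility (redVal q G) M x ∨
    redVal q G y x + redVal q G y z ≤ utility (redVal q G) M y ∨
    redVal q G z x + redVal q G z y ≤ utility (redVal q G) M z := by
  by_contra hcon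
  push_neg at hcon
  exact hstable x y z ⟨mem_univ _, mem_univ _, mem_univ _, hxy, hxz, hyz,
    hcon.1, hcon.2.1, hcon.2.2⟩

end BRed
namespace BRed
open Finset
variable {q : ℕ} {G : SimpleGraph (Fin (3*q))} [DecidableRel G.Adj]
  {M : Finset (Finset (Agent q))}

private lemma gadget_pos (hM : IsMatching (univ : Finset (Agent q)) M)
    (hstable : IsStable (univ : Finset (Agent q)) (redVal q G) M)
    (hcov : ∀ a : Agent q, ∃ t ∈ M, a ∈ t)
    (r : Fin (6*q)) (z : Fin 5) : 1 ≤ utility (redVal q G) M (Agent.p r z) := by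
  by_contra hz
  push_neg at hz
  choose T m₁ m₂ hTM hmemT huniq hne hne1 hne2 hteq hut using rep (G := G) hM hcov
  have hm₁T : ∀ a : Agent q, m₁ a ∈ T a := by intro a; rw [hteq a]; simp
  have hm₂T : ∀ a : Agent q, m₂ a ∈ T a := by intro a; rw [hteq a]; simp
  have haT : ∀ a : Agent q, a ∈ T a := hmemT
  have hU0 : ∀ a : Agent q, 0 ≤ utility (redVal q G) M a := by
    intro a
    rcases redVal01 (G := G) a (m₁ a) with e1 | e1 <;>
      rcases redVal01 (G := G) a (m₂ a) with e2 | e2 <;> rw [hut a] <;> omega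
  have hUz : utility (redVal q G) M (Agent.p r z) = 0 := le_antisymm (by omega) (hU0 _)
  have v1 : redVal q G (Agent.p r z) (Agent.p r (z+1)) = 1 := by rw [redVal_pp]; decide
  have v2 : redVal q G (Agent.p r z) (Agent.p r (z+2)) = 1 := by rw [redVal_pp]; decide
  have v3 : redVal q G (Agent.p r z) (Agent.p r (z+3)) = 0 := by rw [redVal_pp]; decide
  have v4 : redVal q G (Agent.p r z) (Agent.p r (z+4)) = 1 := by rw [redVal_pp]; decide
  have hnm : ∀ m : Agent q, redVal q G (Agent.p r z) m = 1 →
      ∀ t ∈ M, Agent.p r z ∈ t → m ∉ t := by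
    intro m hv t ht hzt hmt
    have hTz : t = T (Agent.p r z) := huniq _ t ht hzt
    subst hTz
    have hself : redVal q G (Agent.p r z) (Agent.p r z) = 0 := by
      rw [redVal, if_neg]
      rintro ⟨-, h⟩
      rw [sub_self] at h
      revert h; decide
    rw [hteq] at hmt
    simp only [Finset.mem_insert, Finset.mem_singleton] at hmt
    have hUz' := hUz
    rw [hut] at hUz'
    rcases hmt with rfl | rfl | rfl
    · rw [hself] at hv; cases hv
    · rcases redVal01 (G := G) (Agent.p r z) (m₂ (Agent.p r z)) with e | e <;> omega
    · rcases redVal01 (G := G) (Agent.p r z) (m₁ (Agent.p r z)) with e | e <;> omega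
  have hd34 : (Agent.p r (z+3) : Agent q) ≠ Agent.p r (z+4) := by simp
  have hd30 : (Agent.p r (z+3) : Agent q) ≠ Agent.p r z := by simp
  have hd40 : (Agent.p r (z+4) : Agent q) ≠ Agent.p r z := by simp
  have hstep := not_blocks (M := M) hstable hd34 hd30 hd40
  have w1 : redVal q G (Agent.p r (z+3)) (Agent.p r (z+4)) = 1 := by rw [redVal_pcc]; decide
  have w2 : redVal q G (Agent.p r (z+3)) (Agent.p r z) = 1 := by rw [redVal_pc0]; decide
  have w3 : redVal q G (Agent.p r (z+4)) (Agent.p r (z+3)) = 1 := by rw [redVal_pcc]; decide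
  have w4 : redVal q G (Agent.p r (z+4)) (Agent.p r z) = 1 := by rw [redVal_pc0]; decide
  rw [w1, w2, w3, w4, v3, v4, hUz] at hstep
  rcases hstep with hA3 | hA4 | habs
  · -- Case B : 2 ≤ utility of p r (z+3)
    obtain ⟨e₁, e₂⟩ : redVal q G (Agent.p r (z+3)) (m₁ (Agent.p r (z+3))) = 1 ∧
        redVal q G (Agent.p r (z+3)) (m₂ (Agent.p r (z+3))) = 1 := by
      rw [hut] at hA3
      rcases redVal01 (G := G) (Agent.p r (z+3)) (m₁ (Agent.p r (z+3))) with e1 | e1 <;>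
        rcases redVal01 (G := G) (Agent.p r (z+3)) (m₂ (Agent.p r (z+3))) with e2 | e2 <;>
        first
          | exact ⟨e1, e2⟩
          | exact absurd hA3 (by omega)
    have hcand3 : ∀ m, redVal q G (Agent.p r (z+3)) m = 1 →
        m = Agent.p r (z+4) ∨ m = Agent.p r z ∨ m = Agent.p r (z+2) := by
      intro m hv
      rcases redVal_p_char r (z+3) m hv with h | h | h
      · left; rw [h, addmod z (show (3:Fin 5)+1 = 4 by decide)]
      · right; left; rw [h, addmod z (show (3:Fin 5)+2 = 0 by decide), add_zero]
      · right; right; rw [h, addmod z (show (3:Fin 5)+4 = 2 by decide)]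
    have ht2 : T (Agent.p r (z+3)) = {Agent.p r (z+3), Agent.p r (z+4), Agent.p r (z+2)} := by
      rcases hcand3 _ e₁ with h1 | h1 | h1 <;> rcases hcand3 _ e₂ with h2 | h2 | h2
      · exact absurd (h1.trans h2.symm) (hne _)
      · exact absurd (hm₁T (Agent.p r (z+3)))
          (by rw [h1]
              exact hnm (Agent.p r (z+4)) v4 (T (Agent.p r (z+3))) (hTM _)
                (by rw [← h2]; exact hm₂T _))
      · rw [hteq, h1, h2]
      · exact absurd (hm₂T (Agent.p r (z+3)))
          (by rw [h2]
              exact hnm (Agent.p r (z+4)) v4 (T (Agent.p r (z+3))) (hTM _)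
                (by rw [← h1]; exact hm₁T _))
      · exact absurd (h1.trans h2.symm) (hne _)
      · exact absurd (hm₂T (Agent.p r (z+3)))
          (by rw [h2]
              exact hnm (Agent.p r (z+2)) v2 (T (Agent.p r (z+3))) (hTM _)
                (by rw [← h1]; exact hm₁T _))
      · rw [hteq, h1, h2]; exact congrArg _ (Finset.pair_comm _ _)
      · exact absurd (hm₁T (Agent.p r (z+3)))
          (by rw [h1]
              exact hnm (Agent.p r (z+2)) v2 (T (Agent.p r (z+3))) (hTM _)
                (by rw [← h2]; exact hm₂T _))
      · exact absurd (h1.trans h2.symm) (hne _)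
    have hmem2 : ∀ x : Agent q, x ∈ T (Agent.p r (z+3)) ↔
        (x = Agent.p r (z+3) ∨ x = Agent.p r (z+4) ∨ x = Agent.p r (z+2)) := by
      intro x; rw [ht2]; simp
    have hT4 : T (Agent.p r (z+4)) = T (Agent.p r (z+3)) :=
      (huniq (Agent.p r (z+4)) _ (hTM (Agent.p r (z+3)))
        ((hmem2 _).2 (Or.inr (Or.inl rfl)))).symm
    have hkey4 : ∀ m, (m = m₁ (Agent.p r (z+4)) ∨ m = m₂ (Agent.p r (z+4))) →
        redVal q G (Agent.p r (z+4)) m = 1 → m = Agent.p r (z+3) := by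
      intro m hm hv
      have hmT : m ∈ T (Agent.p r (z+3)) := by
        rw [← hT4]; rcases hm with rfl | rfl; exacts [hm₁T _, hm₂T _]
      rcases redVal_p_char r (z+4) m hv with h | h | h
      · rw [addmod z (show (4:Fin 5)+1 = 0 by decide), add_zero] at h
        subst h
        rcases (hmem2 _).1 hmT with h' | h' | h' <;> simp at h'
      · rw [addmod z (show (4:Fin 5)+2 = 1 by decide)] at h
        subst h
        rcases (hmem2 _).1 hmT with h' | h' | h' <;> simp at h'
      · rw [addmod z (show (4:Fin 5)+4 = 3 by decide)] at h
        exact h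
    have hU4 : utility (redVal q G) M (Agent.p r (z+4)) ≤ 1 := by
      have h01a := redVal01 (G := G) (Agent.p r (z+4)) (m₁ (Agent.p r (z+4)))
      have h01b := redVal01 (G := G) (Agent.p r (z+4)) (m₂ (Agent.p r (z+4)))
      rw [hut]
      rcases h01a with e1 | e1
      · rcases h01b with e2 | e2 <;> omega
      · rcases h01b with e2 | e2
        · omega
        · exact absurd ((hkey4 _ (Or.inl rfl) e1).trans
            (hkey4 _ (Or.inr rfl) e2).symm) (hne _)
    have hz1nott2 : T (Agent.p r (z+1)) ≠ T (Agent.p r (z+3)) := by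
      intro h
      have := (hmem2 (Agent.p r (z+1))).1 (h ▸ haT (Agent.p r (z+1)))
      rcases this with h' | h' | h' <;> simp at h'
    have hdisj := hM.2 _ (hTM (Agent.p r (z+1))) _ (hTM (Agent.p r (z+3))) hz1nott2
    have hkey1 : ∀ m, (m = m₁ (Agent.p r (z+1)) ∨ m = m₂ (Agent.p r (z+1))) →
        redVal q G (Agent.p r (z+1)) m = 0 := by
      intro m hm
      rcases redVal01 (G := G) (Agent.p r (z+1)) m with e | e
      · exact e
      exfalso
      have hmT : m ∈ T (Agent.p r (z+1)) := by
        rcases hm with rfl | rfl; exacts [hm₁T _, hm₂T _]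
      have hmnot : m ∉ T (Agent.p r (z+3)) := Finset.disjoint_left.mp hdisj hmT
      rcases redVal_p_char r (z+1) m e with h | h | h
      · rw [addmod z (show (1:Fin 5)+1 = 2 by decide)] at h
        exact hmnot (by rw [h]; exact (hmem2 _).2 (Or.inr (Or.inr rfl)))
      · rw [addmod z (show (1:Fin 5)+2 = 3 by decide)] at h
        exact hmnot (by rw [h]; exact (hmem2 _).2 (Or.inl rfl))
      · rw [addmod z (show (1:Fin 5)+4 = 0 by decide), add_zero] at h
        subst h
        exact hnm (Agent.p r (z+1)) v1 (T (Agent.p r (z+1))) (hTM _) hmT (haT _)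
    have hU1z : utility (redVal q G) M (Agent.p r (z+1)) = 0 := by
      rw [hut, hkey1 _ (Or.inl rfl), hkey1 _ (Or.inr rfl)]
      ring
    have d1 : (Agent.p r (z+4) : Agent q) ≠ Agent.p r z := by simp
    have d2 : (Agent.p r (z+4) : Agent q) ≠ Agent.p r (z+1) := by simp
    have d3 : (Agent.p r z : Agent q) ≠ Agent.p r (z+1) := by simp
    have u1 : redVal q G (Agent.p r (z+4)) (Agent.p r (z+1)) = 1 := by rw [redVal_pcc]; decide
    have u2 : redVal q G (Agent.p r (z+1)) (Agent.p r (z+4)) = 0 := by rw [redVal_pcc]; decide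
    have u3 : redVal q G (Agent.p r (z+1)) (Agent.p r z) = 1 := by rw [redVal_pc0]; decide
    rcases not_blocks (M := M) hstable d1 d2 d3 with h | h | h
    · rw [w4, u1] at h; omega
    · rw [v4, v1, hUz] at h; omega
    · rw [u2, u3, hU1z] at h; omega
  · -- Case A : 2 ≤ utility of p r (z+4)
    obtain ⟨e₁, e₂⟩ : redVal q G (Agent.p r (z+4)) (m₁ (Agent.p r (z+4))) = 1 ∧
        redVal q G (Agent.p r (z+4)) (m₂ (Agent.p r (z+4))) = 1 := by
      rw [hut] at hA4
      rcases redVal01 (G := G) (Agent.p r (z+4)) (m₁ (Agent.p r (z+4))) with e1 | e1 <;>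
        rcases redVal01 (G := G) (Agent.p r (z+4)) (m₂ (Agent.p r (z+4))) with e2 | e2 <;>
        first
          | exact ⟨e1, e2⟩
          | exact absurd hA4 (by omega)
    have hcand : ∀ m, (m = m₁ (Agent.p r (z+4)) ∨ m = m₂ (Agent.p r (z+4))) →
        redVal q G (Agent.p r (z+4)) m = 1 →
        m = Agent.p r (z+1) ∨ m = Agent.p r (z+3) := by
      intro m hm hv
      rcases redVal_p_char r (z+4) m hv with h | h | h
      · rw [addmod z (show (4:Fin 5)+1 = 0 by decide), add_zero] at h
        exfalso
        refine hnm (Agent.p r (z+4)) v4 (T (Agent.p r (z+4))) (hTM _) ?_ (haT _)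
        rw [← h]
        rcases hm with rfl | rfl
        exacts [hm₁T _, hm₂T _]
      · left; rw [h, addmod z (show (4:Fin 5)+2 = 1 by decide)]
      · right; rw [h, addmod z (show (4:Fin 5)+4 = 3 by decide)]
    have ht1 : T (Agent.p r (z+4)) = {Agent.p r (z+4), Agent.p r (z+1), Agent.p r (z+3)} := by
      rcases hcand _ (Or.inl rfl) e₁ with h1 | h1 <;>
        rcases hcand _ (Or.inr rfl) e₂ with h2 | h2
      · exact absurd (h1.trans h2.symm) (hne _)
      · rw [hteq, h1, h2]
      · rw [hteq, h1, h2]; exact congrArg _ (Finset.pair_comm _ _)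
      · exact absurd (h1.trans h2.symm) (hne _)
    have hmem1 : ∀ x : Agent q, x ∈ T (Agent.p r (z+4)) ↔
        (x = Agent.p r (z+4) ∨ x = Agent.p r (z+1) ∨ x = Agent.p r (z+3)) := by
      intro x; rw [ht1]; simp
    have hT1 : T (Agent.p r (z+1)) = T (Agent.p r (z+4)) :=
      (huniq (Agent.p r (z+1)) _ (hTM (Agent.p r (z+4)))
        ((hmem1 _).2 (Or.inr (Or.inl rfl)))).symm
    have hkey1 : ∀ m, (m = m₁ (Agent.p r (z+1)) ∨ m = m₂ (Agent.p r (z+1))) →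
        redVal q G (Agent.p r (z+1)) m = 1 → m = Agent.p r (z+3) := by
      intro m hm hv
      have hmT : m ∈ T (Agent.p r (z+4)) := by
        rw [← hT1]; rcases hm with rfl | rfl; exacts [hm₁T _, hm₂T _]
      rcases redVal_p_char r (z+1) m hv with h | h | h
      · rw [addmod z (show (1:Fin 5)+1 = 2 by decide)] at h
        subst h
        rcases (hmem1 _).1 hmT with h' | h' | h' <;> simp at h'
      · rw [addmod z (show (1:Fin 5)+2 = 3 by decide)] at h
        exact h
      · rw [addmod z (show (1:Fin 5)+4 = 0 by decide), add_zero] at h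
        subst h
        exact absurd ((hmem1 _).2 (Or.inr (Or.inl rfl)))
          (hnm (Agent.p r (z+1)) v1 (T (Agent.p r (z+4))) (hTM _) hmT)
    have hU1 : utility (redVal q G) M (Agent.p r (z+1)) ≤ 1 := by
      have h01a := redVal01 (G := G) (Agent.p r (z+1)) (m₁ (Agent.p r (z+1)))
      have h01b := redVal01 (G := G) (Agent.p r (z+1)) (m₂ (Agent.p r (z+1)))
      rw [hut]
      rcases h01a with e1 | e1
      · rcases h01b with e2 | e2 <;> omega
      · rcases h01b with e2 | e2
        · omega
        · exact absurd ((hkey1 _ (Or.inl rfl) e1).trans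
            (hkey1 _ (Or.inr rfl) e2).symm) (hne _)
    have hz2nott1 : T (Agent.p r (z+2)) ≠ T (Agent.p r (z+4)) := by
      intro h
      have := (hmem1 (Agent.p r (z+2))).1 (h ▸ haT (Agent.p r (z+2)))
      rcases this with h' | h' | h' <;> simp at h'
    have hdisj := hM.2 _ (hTM (Agent.p r (z+2))) _ (hTM (Agent.p r (z+4))) hz2nott1
    have hkey2 : ∀ m, (m = m₁ (Agent.p r (z+2)) ∨ m = m₂ (Agent.p r (z+2))) →
        redVal q G (Agent.p r (z+2)) m = 0 := by
      intro m hm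
      rcases redVal01 (G := G) (Agent.p r (z+2)) m with e | e
      · exact e
      exfalso
      have hmT : m ∈ T (Agent.p r (z+2)) := by
        rcases hm with rfl | rfl; exacts [hm₁T _, hm₂T _]
      have hmnot : m ∉ T (Agent.p r (z+4)) := Finset.disjoint_left.mp hdisj hmT
      rcases redVal_p_char r (z+2) m e with h | h | h
      · rw [addmod z (show (2:Fin 5)+1 = 3 by decide)] at h
        exact hmnot (by rw [h]; exact (hmem1 _).2 (Or.inr (Or.inr rfl)))
      · rw [addmod z (show (2:Fin 5)+2 = 4 by decide)] at h
        exact hmnot (by rw [h]; exact (hmem1 _).2 (Or.inl rfl))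
      · rw [addmod z (show (2:Fin 5)+4 = 1 by decide)] at h
        exact hmnot (by rw [h]; exact (hmem1 _).2 (Or.inr (Or.inl rfl)))
    have hU2z : utility (redVal q G) M (Agent.p r (z+2)) = 0 := by
      rw [hut, hkey2 _ (Or.inl rfl), hkey2 _ (Or.inr rfl)]
      ring
    have d1 : (Agent.p r z : Agent q) ≠ Agent.p r (z+1) := by simp
    have d2 : (Agent.p r z : Agent q) ≠ Agent.p r (z+2) := by simp
    have d3 : (Agent.p r (z+1) : Agent q) ≠ Agent.p r (z+2) := by simp
    have u1 : redVal q G (Agent.p r (z+1)) (Agent.p r z) = 1 := by rw [redVal_pc0]; decide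
    have u2 : redVal q G (Agent.p r (z+1)) (Agent.p r (z+2)) = 1 := by rw [redVal_pcc]; decide
    have u3 : redVal q G (Agent.p r (z+2)) (Agent.p r z) = 0 := by rw [redVal_pc0]; decide
    have u4 : redVal q G (Agent.p r (z+2)) (Agent.p r (z+1)) = 1 := by rw [redVal_pcc]; decide
    rcases not_blocks (M := M) hstable d1 d2 d3 with h | h | h
    · rw [v1, v2, hUz] at h; omega
    · rw [u1, u2] at h; omega
    · rw [u3, u4, hU2z] at h; omega
  · omega

end BRed
namespace BRed
open Finset
variable {q : ℕ} {G : SimpleGraph (Fin (3*q))} [DecidableRel G.Adj]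
  {M : Finset (Finset (Agent q))}

private lemma one_gadget (hM : IsMatching (univ : Finset (Agent q)) M)
    (hstable : IsStable (univ : Finset (Agent q)) (redVal q G) M)
    (hcov : ∀ a : Agent q, ∃ t ∈ M, a ∈ t) :
    ∀ t ∈ M, ∀ (r : Fin (6*q)) (x : Fin 5) (r' : Fin (6*q)) (x' : Fin 5),
      Agent.p r x ∈ t → Agent.p r' x' ∈ t → r = r' := by
  intro t ht r x r' x' hx hx'
  by_contra hrr
  choose T m₁ m₂ hTM hmemT huniq hne hne1 hne2 hteq hut using rep (G := G) hM hcov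
  have hm₁T : ∀ a : Agent q, m₁ a ∈ T a := by intro a; rw [hteq a]; simp
  have hm₂T : ∀ a : Agent q, m₂ a ∈ T a := by intro a; rw [hteq a]; simp
  have hmate : ∀ (r₀ : Fin (6*q)) (x₀ : Fin 5), ∃ y, y ≠ x₀ ∧
      Agent.p r₀ y ∈ T (Agent.p r₀ x₀) := by
    intro r₀ x₀
    have h1 := gadget_pos hM hstable hcov r₀ x₀
    have hval : redVal q G (Agent.p r₀ x₀) (m₁ (Agent.p r₀ x₀)) = 1 ∨
        redVal q G (Agent.p r₀ x₀) (m₂ (Agent.p r₀ x₀)) = 1 := by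
      rw [hut] at h1
      rcases redVal01 (G := G) (Agent.p r₀ x₀) (m₁ (Agent.p r₀ x₀)) with e1 | e1
      · rcases redVal01 (G := G) (Agent.p r₀ x₀) (m₂ (Agent.p r₀ x₀)) with e2 | e2
        · exact absurd h1 (by omega)
        · exact Or.inr e2
      · exact Or.inl e1
    rcases hval with hv | hv
    · rcases redVal_p_char r₀ x₀ _ hv with h | h | h
      · exact ⟨x₀+1, by simp, by rw [← h]; exact hm₁T _⟩
      · exact ⟨x₀+2, by simp, by rw [← h]; exact hm₁T _⟩
      · exact ⟨x₀+4, by simp, by rw [← h]; exact hm₁T _⟩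
    · rcases redVal_p_char r₀ x₀ _ hv with h | h | h
      · exact ⟨x₀+1, by simp, by rw [← h]; exact hm₂T _⟩
      · exact ⟨x₀+2, by simp, by rw [← h]; exact hm₂T _⟩
      · exact ⟨x₀+4, by simp, by rw [← h]; exact hm₂T _⟩
  obtain ⟨y, hyx, hy⟩ := hmate r x
  obtain ⟨y', hyx', hy'⟩ := hmate r' x'
  have h1 : Agent.p r y ∈ t := by rw [huniq _ t ht hx]; exact hy
  have h2 : Agent.p r' y' ∈ t := by rw [huniq _ t ht hx']; exact hy'
  have hsub : ({Agent.p r x, Agent.p r y, Agent.p r' x', Agent.p r' y'} :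
      Finset (Agent q)) ⊆ t := by
    intro w hw
    simp only [Finset.mem_insert, Finset.mem_singleton] at hw
    rcases hw with rfl | rfl | rfl | rfl
    exacts [hx, h1, hx', h2]
  have hcard4 : ({Agent.p r x, Agent.p r y, Agent.p r' x', Agent.p r' y'} :
      Finset (Agent q)).card = 4 := by
    rw [Finset.card_insert_of_notMem (by simp [hrr, Ne.symm hyx]),
      Finset.card_insert_of_notMem (by simp [hrr]),
      Finset.card_insert_of_notMem (by simp [Ne.symm hyx']),
      Finset.card_singleton]
  have hle := Finset.card_le_card hsub
  rw [hcard4, (hM.1 t ht).1] at hle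
  omega

private lemma gadget_absorb (hM : IsMatching (univ : Finset (Agent q)) M)
    (hstable : IsStable (univ : Finset (Agent q)) (redVal q G) M)
    (hcov : ∀ a : Agent q, ∃ t ∈ M, a ∈ t) (r : Fin (6*q)) :
    ∃ t ∈ M, ∃ (x y : Fin 5) (i : Fin (3*q)) (s : Fin 2),
      t = {Agent.p r x, Agent.p r y, Agent.a i s} := by
  classical
  choose T m₁ m₂ hTM hmemT huniq hne hne1 hne2 hteq hut using rep (G := G) hM hcov
  have hm₁T : ∀ a : Agent q, m₁ a ∈ T a := by intro a; rw [hteq a]; simp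
  have hm₂T : ∀ a : Agent q, m₂ a ∈ T a := by intro a; rw [hteq a]; simp
  have hmate : ∀ (r₀ : Fin (6*q)) (x₀ : Fin 5), ∃ y, y ≠ x₀ ∧
      Agent.p r₀ y ∈ T (Agent.p r₀ x₀) := by
    intro r₀ x₀
    have h1 := gadget_pos hM hstable hcov r₀ x₀
    have hval : redVal q G (Agent.p r₀ x₀) (m₁ (Agent.p r₀ x₀)) = 1 ∨
        redVal q G (Agent.p r₀ x₀) (m₂ (Agent.p r₀ x₀)) = 1 := by
      rw [hut] at h1
      rcases redVal01 (G := G) (Agent.p r₀ x₀) (m₁ (Agent.p r₀ x₀)) with e1 | e1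
      · rcases redVal01 (G := G) (Agent.p r₀ x₀) (m₂ (Agent.p r₀ x₀)) with e2 | e2
        · exact absurd h1 (by omega)
        · exact Or.inr e2
      · exact Or.inl e1
    rcases hval with hv | hv
    · rcases redVal_p_char r₀ x₀ _ hv with h | h | h
      · exact ⟨x₀+1, by simp, by rw [← h]; exact hm₁T _⟩
      · exact ⟨x₀+2, by simp, by rw [← h]; exact hm₁T _⟩
      · exact ⟨x₀+4, by simp, by rw [← h]; exact hm₁T _⟩
    · rcases redVal_p_char r₀ x₀ _ hv with h | h | h
      · exact ⟨x₀+1, by simp, by rw [← h]; exact hm₂T _⟩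
      · exact ⟨x₀+2, by simp, by rw [← h]; exact hm₂T _⟩
      · exact ⟨x₀+4, by simp, by rw [← h]; exact hm₂T _⟩
  set P : Finset (Agent q) := (univ : Finset (Fin 5)).image (fun x => Agent.p r x) with hP
  have hPmem : ∀ w : Agent q, w ∈ P ↔ ∃ x, w = Agent.p r x := by
    intro w; simp [hP, eq_comm]
  have hPcard : P.card = 5 := by
    rw [hP, Finset.card_image_of_injective _ (fun x y h => by simpa using h)]
    simp
  set S : Finset (Finset (Agent q)) := M.filter (fun t => ∃ x : Fin 5, Agent.p r x ∈ t)
    with hS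
  have hSsub : S ⊆ M := Finset.filter_subset _ _
  have hbU : S.biUnion (fun t => t ∩ P) = P := by
    ext w
    simp only [Finset.mem_biUnion, Finset.mem_inter]
    constructor
    · rintro ⟨t, htS, -, hwP⟩; exact hwP
    · intro hwP
      obtain ⟨x, rfl⟩ := (hPmem w).1 hwP
      refine ⟨T (Agent.p r x), ?_, hmemT _, hwP⟩
      rw [hS, Finset.mem_filter]
      exact ⟨hTM _, x, hmemT _⟩
  have hdisjS : ∀ t ∈ S, ∀ s ∈ S, t ≠ s → Disjoint (t ∩ P) (s ∩ P) := fun t ht s hs hne' =>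
    (hM.2 t (hSsub ht) s (hSsub hs) hne').mono Finset.inter_subset_left
      Finset.inter_subset_left
  have hsum : ∑ t ∈ S, (t ∩ P).card = 5 := by
    rw [← Finset.card_biUnion hdisjS, hbU, hPcard]
  have hlow : ∀ t ∈ S, 2 ≤ (t ∩ P).card := by
    intro t htS
    have htS' := htS
    rw [hS, Finset.mem_filter] at htS'
    obtain ⟨htM, x, hx⟩ := htS'
    obtain ⟨y, hyx, hy⟩ := hmate r x
    have hTt : t = T (Agent.p r x) := huniq _ t htM hx
    have hsub2 : ({Agent.p r x, Agent.p r y} : Finset (Agent q)) ⊆ t ∩ P := by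
      intro w hw
      simp only [Finset.mem_insert, Finset.mem_singleton] at hw
      rcases hw with rfl | rfl
      · exact Finset.mem_inter.mpr ⟨hx, (hPmem _).2 ⟨x, rfl⟩⟩
      · exact Finset.mem_inter.mpr ⟨by rw [hTt]; exact hy, (hPmem _).2 ⟨y, rfl⟩⟩
    calc 2 = ({Agent.p r x, Agent.p r y} : Finset (Agent q)).card := by
            rw [Finset.card_insert_of_notMem (by simp [Ne.symm hyx]), Finset.card_singleton]
      _ ≤ _ := Finset.card_le_card hsub2
  have hupp : ∀ t ∈ S, (t ∩ P).card ≤ 3 := by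
    intro t htS
    calc (t ∩ P).card ≤ t.card := Finset.card_le_card Finset.inter_subset_left
      _ = 3 := (hM.1 t (hSsub htS)).1
  have hScard : S.card = 2 := by
    have h1 : 2 * S.card ≤ 5 := by
      calc 2 * S.card = ∑ _t ∈ S, 2 := by rw [Finset.sum_const, smul_eq_mul, mul_comm]
        _ ≤ ∑ t ∈ S, (t ∩ P).card := Finset.sum_le_sum hlow
        _ = 5 := hsum
    have h2 : 5 ≤ 3 * S.card := by
      calc (5:ℕ) = ∑ t ∈ S, (t ∩ P).card := hsum.symm
        _ ≤ ∑ _t ∈ S, 3 := Finset.sum_le_sum hupp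
        _ = 3 * S.card := by rw [Finset.sum_const, smul_eq_mul, mul_comm]
    omega
  obtain ⟨t₁, t₂, hne12, hSeq⟩ := Finset.card_eq_two.mp hScard
  have hsum2 : (t₁ ∩ P).card + (t₂ ∩ P).card = 5 := by
    rw [hSeq, Finset.sum_pair hne12] at hsum
    exact hsum
  obtain ⟨t, htS, ht2⟩ : ∃ t ∈ S, (t ∩ P).card = 2 := by
    have l1 := hlow t₁ (by rw [hSeq]; simp)
    have l2 := hlow t₂ (by rw [hSeq]; simp)
    have u1 := hupp t₁ (by rw [hSeq]; simp)
    have u2 := hupp t₂ (by rw [hSeq]; simp)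
    rcases Nat.lt_or_ge (t₁ ∩ P).card 3 with hcc | hcc
    · exact ⟨t₁, by rw [hSeq]; simp, by omega⟩
    · exact ⟨t₂, by rw [hSeq]; simp, by omega⟩
  have htM : t ∈ M := hSsub htS
  obtain ⟨u, v, huv, hUV⟩ := Finset.card_eq_two.mp ht2
  have hu : u ∈ t ∩ P := by rw [hUV]; simp
  have hv : v ∈ t ∩ P := by rw [hUV]; simp
  obtain ⟨x, rfl⟩ := (hPmem u).1 (Finset.mem_inter.mp hu).2
  obtain ⟨y, rfl⟩ := (hPmem v).1 (Finset.mem_inter.mp hv).2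
  have hxy : x ≠ y := fun h => huv (by rw [h])
  have hsubt : ({Agent.p r x, Agent.p r y} : Finset (Agent q)) ⊆ t := by
    intro w hw
    simp only [Finset.mem_insert, Finset.mem_singleton] at hw
    rcases hw with rfl | rfl
    · exact (Finset.mem_inter.mp hu).1
    · exact (Finset.mem_inter.mp hv).1
  have hcs : (t \ {Agent.p r x, Agent.p r y}).card = 1 := by
    rw [Finset.card_sdiff_of_subset hsubt, (hM.1 t htM).1,
      Finset.card_insert_of_notMem (by simp [hxy]), Finset.card_singleton]
  obtain ⟨c, hc⟩ := Finset.card_eq_one.mp hcs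
  have hcmem := hc ▸ Finset.mem_singleton_self c
  have hct : c ∈ t := (Finset.mem_sdiff.mp hcmem).1
  have hcnot : c ∉ ({Agent.p r x, Agent.p r y} : Finset (Agent q)) :=
    (Finset.mem_sdiff.mp hcmem).2
  have hteq' : t = {Agent.p r x, Agent.p r y, c} := by
    have hun := Finset.sdiff_union_of_subset hsubt
    rw [hc] at hun
    rw [← hun]
    ext w
    simp only [Finset.mem_union, Finset.mem_insert, Finset.mem_singleton]
    tauto
  have hcP : c ∉ P := by
    intro hcP'
    exact hcnot (by rw [← hUV]; exact Finset.mem_inter.mpr ⟨hct, hcP'⟩)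
  rcases c with ⟨i, s⟩ | j | ⟨r'', w⟩
  · exact ⟨t, htM, x, y, i, s, hteq'⟩
  · -- c = b j : blocked by {a j 0, a j 1, b j}
    exfalso
    have hTbj : T (Agent.b j) = t := (huniq _ t htM hct).symm
    have hmv : ∀ m, (m = m₁ (Agent.b j) ∨ m = m₂ (Agent.b j)) →
        redVal q G (Agent.b j) m = 0 := by
      intro m hm
      have hmT : m ∈ t := by
        rw [← hTbj]; rcases hm with rfl | rfl; exacts [hm₁T _, hm₂T _]
      have hmne : m ≠ Agent.b j := by
        rcases hm with rfl | rfl; exacts [Ne.symm (hne1 _), Ne.symm (hne2 _)]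
      rw [hteq'] at hmT
      simp only [Finset.mem_insert, Finset.mem_singleton] at hmT
      rcases hmT with rfl | rfl | rfl
      · exact redVal_bp j r x
      · exact redVal_bp j r y
      · exact absurd rfl hmne
    have hUb : utility (redVal q G) M (Agent.b j) = 0 := by
      rw [hut, hmv _ (Or.inl rfl), hmv _ (Or.inr rfl)]
      ring
    have hUa : ∀ s : Fin 2, utility (redVal q G) M (Agent.a j s) ≤ 1 := by
      intro s
      have hbmate : Agent.b j ∈ T (Agent.a j s) → False := by
        intro hb
        have hT' : T (Agent.a j s) = T (Agent.b j) := huniq (Agent.b j) _ (hTM _) hb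
        have hin : Agent.a j s ∈ t := by rw [← hTbj, ← hT']; exact hmemT _
        rw [hteq'] at hin
        simp at hin
      have h01a := redVal01 (G := G) (Agent.a j s) (m₁ (Agent.a j s))
      have h01b := redVal01 (G := G) (Agent.a j s) (m₂ (Agent.a j s))
      rw [hut]
      rcases h01a with e1 | e1
      · rcases h01b with e2 | e2 <;> omega
      · rcases h01b with e2 | e2
        · omega
        · exfalso
          rcases redVal_a_char j s _ e1 with f1 | f1 <;>
            rcases redVal_a_char j s _ e2 with f2 | f2
          · exact hne _ (f1.trans f2.symm)
          · exact hbmate (by rw [← f2]; exact hm₂T _)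
          · exact hbmate (by rw [← f1]; exact hm₁T _)
          · exact hne _ (f1.trans f2.symm)
    have hd01 : (Agent.a j 0 : Agent q) ≠ Agent.a j 1 := by
      intro h; injection h with h1 h2; exact absurd h2 (by decide)
    have hd0b : (Agent.a j 0 : Agent q) ≠ Agent.b j := by simp
    have hd1b : (Agent.a j 1 : Agent q) ≠ Agent.b j := by simp
    have va01 : redVal q G (Agent.a j 0) (Agent.a j 1) = 1 := by
      rw [redVal, if_pos ⟨rfl, by decide⟩]
    have va10 : redVal q G (Agent.a j 1) (Agent.a j 0) = 1 := by
      rw [redVal, if_pos ⟨rfl, by decide⟩]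
    rcases not_blocks (M := M) hstable hd01 hd0b hd1b with h | h | h
    · rw [va01, redVal_ab j 0] at h
      have := hUa 0; omega
    · rw [va10, redVal_ab j 1] at h
      have := hUa 1; omega
    · rw [redVal_ba j 0, redVal_ba j 1, hUb] at h
      omega
  · -- c = p r'' w
    exfalso
    have hrne : r'' ≠ r := fun h => hcP ((hPmem _).2 ⟨w, by rw [h]⟩)
    obtain ⟨y', hy'w, hy'⟩ := hmate r'' w
    have hTc : T (Agent.p r'' w) = t := (huniq _ t htM hct).symm
    have hy't : Agent.p r'' y' ∈ t := by rw [← hTc]; exact hy'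
    rw [hteq'] at hy't
    simp only [Finset.mem_insert, Finset.mem_singleton] at hy't
    rcases hy't with h | h | h
    · exact hrne (by injection h with h1 h2)
    · exact hrne (by injection h with h1 h2)
    · exact hy'w (by injection h with h1 h2)

end BRed
/-- In any stable matching of the reduced instance in which every agent is matched, the
triple containing `b_i` is `{b_i, b_j, b_k}` for some `j, k` with `{w_i, w_j} ∈ E` and
`{w_i, w_k} ∈ E`. -/
theorem b_agents_matched_to_adjacent_b_agents
    (q : ℕ) (G : SimpleGraph (Fin (3*q))) [DecidableRel G.Adj]
    (M : Finset (Finset (Agent q)))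
    (hM : IsMatching (Finset.univ : Finset (Agent q)) M)
    (hstable : IsStable Finset.univ (redVal q G) M)
    (hcard : M.card = 13 * q) (i : Fin (3*q)) :
    ∃ j k : Fin (3*q), G.Adj i j ∧ G.Adj i k ∧
      ∃ t ∈ M, Agent.b i ∈ t ∧ t = {Agent.b i, Agent.b j, Agent.b k} := by
  classical
  have hcov := BRed.covers hM hcard
  choose T m₁ m₂ hTM hmemT huniq hne hne1 hne2 hteq hut using BRed.rep (G := G) hM hcov
  have hm₁T : ∀ a : Agent q, m₁ a ∈ T a := by intro a; rw [hteq a]; simp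
  have hm₂T : ∀ a : Agent q, m₂ a ∈ T a := by intro a; rw [hteq a]; simp
  choose tg htgM xg yg ig sg htg using BRed.gadget_absorb hM hstable hcov
  have hog := BRed.one_gadget hM hstable hcov
  have hginj : Function.Injective (fun r : Fin (6*q) => (ig r, sg r)) := by
    intro r r' h
    simp only [Prod.mk.injEq] at h
    obtain ⟨h1, h2⟩ := h
    have ha1 : Agent.a (ig r) (sg r) ∈ tg r := by rw [htg r]; simp
    have ha2 : Agent.a (ig r) (sg r) ∈ tg r' := by rw [htg r', ← h1, ← h2]; simp
    have heq : tg r = tg r' := BRed.triple_eq hM (htgM r) (htgM r') ha1 ha2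
    have hp1 : Agent.p r (xg r) ∈ tg r' := by rw [← heq, htg r]; simp
    have hp2 : Agent.p r' (xg r') ∈ tg r' := by rw [htg r']; simp
    exact hog (tg r') (htgM r') r (xg r) r' (xg r') hp1 hp2
  have hgbij : Function.Bijective (fun r : Fin (6*q) => (ig r, sg r)) := by
    rw [Fintype.bijective_iff_injective_and_card]
    refine ⟨hginj, ?_⟩
    simp only [Fintype.card_fin, Fintype.card_prod]
    omega
  have haP : ∀ (i' : Fin (3*q)) (s : Fin 2), ∃ (r : Fin (6*q)) (x y : Fin 5),
      T (Agent.a i' s) = {Agent.p r x, Agent.p r y, Agent.a i' s} := by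
    intro i' s
    obtain ⟨r, hr⟩ := hgbij.2 (i', s)
    simp only [Prod.mk.injEq] at hr
    obtain ⟨h1, h2⟩ := hr
    refine ⟨r, xg r, yg r, ?_⟩
    have hmem : Agent.a i' s ∈ tg r := by rw [htg r, h1, h2]; simp
    rw [← huniq _ _ (htgM r) hmem, htg r, h1, h2]
  have hUa0 : ∀ (i' : Fin (3*q)) (s : Fin 2),
      utility (redVal q G) M (Agent.a i' s) = 0 := by
    intro i' s
    obtain ⟨r, x, y, hT⟩ := haP i' s
    have hmv : ∀ m, (m = m₁ (Agent.a i' s) ∨ m = m₂ (Agent.a i' s)) →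
        redVal q G (Agent.a i' s) m = 0 := by
      intro m hm
      have hmT : m ∈ T (Agent.a i' s) := by
        rcases hm with rfl | rfl; exacts [hm₁T _, hm₂T _]
      have hmne : m ≠ Agent.a i' s := by
        rcases hm with rfl | rfl; exacts [Ne.symm (hne1 _), Ne.symm (hne2 _)]
      rw [hT] at hmT
      simp only [Finset.mem_insert, Finset.mem_singleton] at hmT
      rcases hmT with rfl | rfl | rfl
      · exact BRed.redVal_ap i' s r x
      · exact BRed.redVal_ap i' s r y
      · exact absurd rfl hmne
    rw [hut, hmv _ (Or.inl rfl), hmv _ (Or.inr rfl)]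
    ring
  have hd01 : (Agent.a i 0 : Agent q) ≠ Agent.a i 1 := by
    intro h; injection h with h1 h2; exact absurd h2 (by decide)
  have hd0b : (Agent.a i 0 : Agent q) ≠ Agent.b i := by simp
  have hd1b : (Agent.a i 1 : Agent q) ≠ Agent.b i := by simp
  have va01 : redVal q G (Agent.a i 0) (Agent.a i 1) = 1 := by
    rw [redVal, if_pos ⟨rfl, by decide⟩]
  have va10 : redVal q G (Agent.a i 1) (Agent.a i 0) = 1 := by
    rw [redVal, if_pos ⟨rfl, by decide⟩]
  have hU2 : ∀ a : Agent q, utility (redVal q G) M a ≤ 2 := by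
    intro a
    rcases BRed.redVal01 (G := G) a (m₁ a) with e1 | e1 <;>
      rcases BRed.redVal01 (G := G) a (m₂ a) with e2 | e2 <;> rw [hut a] <;> omega
  have hUb2 : utility (redVal q G) M (Agent.b i) = 2 := by
    rcases BRed.not_blocks (M := M) hstable hd01 hd0b hd1b with h | h | h
    · rw [va01, BRed.redVal_ab i 0, hUa0 i 0] at h; omega
    · rw [va10, BRed.redVal_ab i 1, hUa0 i 1] at h; omega
    · rw [BRed.redVal_ba i 0, BRed.redVal_ba i 1] at h
      have := hU2 (Agent.b i); omega
  obtain ⟨e₁, e₂⟩ : redVal q G (Agent.b i) (m₁ (Agent.b i)) = 1 ∧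
      redVal q G (Agent.b i) (m₂ (Agent.b i)) = 1 := by
    have hu := hUb2
    rw [hut] at hu
    rcases BRed.redVal01 (G := G) (Agent.b i) (m₁ (Agent.b i)) with e1 | e1 <;>
      rcases BRed.redVal01 (G := G) (Agent.b i) (m₂ (Agent.b i)) with e2 | e2 <;>
      first
        | exact ⟨e1, e2⟩
        | exact absurd hu (by omega)
  have hbm : ∀ m, (m = m₁ (Agent.b i) ∨ m = m₂ (Agent.b i)) →
      redVal q G (Agent.b i) m = 1 → ∃ j, G.Adj i j ∧ m = Agent.b j := by
    intro m hm hv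
    rcases BRed.redVal_b_char i m hv with ⟨s, rfl⟩ | h
    · exfalso
      obtain ⟨r, x, y, hT⟩ := haP i s
      have hmem : Agent.a i s ∈ T (Agent.b i) := by
        rcases hm with h' | h'
        · rw [h']; exact hm₁T _
        · rw [h']; exact hm₂T _
      have hTT : T (Agent.b i) = T (Agent.a i s) := huniq (Agent.a i s) _ (hTM _) hmem
      have hbmem : Agent.b i ∈ T (Agent.a i s) := by rw [← hTT]; exact hmemT _
      rw [hT] at hbmem
      simp at hbmem
    · exact h
  obtain ⟨j, hadjj, hj⟩ := hbm _ (Or.inl rfl) e₁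
  obtain ⟨k, hadjk, hk⟩ := hbm _ (Or.inr rfl) e₂
  exact ⟨j, k, hadjj, hadjk, T (Agent.b i), hTM _, hmemT _,
    by rw [hteq (Agent.b i), hj, hk]⟩
end

section
/- Let (N,V) be an instance of 3D-SR-SAS-BIN, let M_△ be a maximal set of pairwise disjoint triangles of (N,V) (maximal in the sense that every triangle of (N,V) shares at least one agent with some triangle in M_△), let N' = N ∖ ∪M_△, and let (N',V') be the sub-instance of (N,V) induced on N'. If M is a stable P-matching in (N',V'), then M ∪ M_△ is a stable P-matching in (N,V). -/
open Finset

variable {A : Type*}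

/-- Removing a maximal set `Mt` of pairwise disjoint triangles from a binary symmetric
instance: if `M` is a stable `P`-matching in the sub-instance induced on the remaining
agents `N \ ∪ Mt`, then `M ∪ Mt` is a stable `P`-matching in `(N, V)`. -/
theorem union_maximal_triangles_stable [DecidableEq A]
    (N : Finset A) (val : A → A → ℤ) (hbs : BinSym N val)
    (Mt : Finset (Finset A))
    (hMt_tri : ∀ t ∈ Mt, t.card = 3 ∧ t ⊆ N ∧ ∀ x ∈ t, ∀ y ∈ t, x ≠ y → val x y = 1)
    (hMt_disj : ∀ t ∈ Mt, ∀ s ∈ Mt, t ≠ s → Disjoint t s)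
    (hmax : ∀ x y z : A, IsTriangle N val x y z → ∃ t ∈ Mt, x ∈ t ∨ y ∈ t ∨ z ∈ t)
    (M : Finset (Finset A))
    (hM : IsPMatching (N \ Mt.biUnion id) val M)
    (hMst : IsStable (N \ Mt.biUnion id) val M) :
    IsPMatching N val (M ∪ Mt) ∧ IsStable N val (M ∪ Mt) := by
  obtain ⟨hM_match, hM_pos⟩ := hM
  have hsubMt : ∀ t ∈ Mt, t ⊆ Mt.biUnion id := fun t ht a hat =>
    Finset.mem_biUnion.mpr ⟨t, ht, hat⟩
  have hMsub : ∀ t ∈ M, t ⊆ N \ Mt.biUnion id := fun t ht => (hM_match.1 t ht).2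
  have hutil_eq : ∀ a, a ∉ Mt.biUnion id → utility val (M ∪ Mt) a = utility val M a := by
    intro a ha
    unfold utility
    congr 1
    ext s
    simp only [Finset.mem_filter, Finset.mem_union]
    constructor
    · rintro ⟨h | h, has⟩
      · exact ⟨h, has⟩
      · exact absurd (hsubMt s h has) ha
    · rintro ⟨h, has⟩; exact ⟨Or.inl h, has⟩
  have hutil_tri : ∀ a t, t ∈ Mt → a ∈ t → utility val (M ∪ Mt) a = 2 := by
    intro a t ht hat
    have hfilter : (M ∪ Mt).filter (fun s => a ∈ s) = {t} := by
      ext s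
      simp only [Finset.mem_filter, Finset.mem_union, Finset.mem_singleton]
      constructor
      · rintro ⟨h | h, has⟩
        · exact absurd (hsubMt t ht hat) (Finset.mem_sdiff.mp (hMsub s h has)).2
        · by_contra hne
          exact Finset.disjoint_left.mp (hMt_disj s h t ht hne) has hat
      · rintro rfl; exact ⟨Or.inr ht, hat⟩
    unfold utility
    rw [hfilter, Finset.sum_singleton]
    have h1 : ∀ b ∈ t.erase a, val a b = 1 := by
      intro b hb
      exact (hMt_tri t ht).2.2 a hat b (Finset.mem_of_mem_erase hb)
        (Ne.symm (Finset.ne_of_mem_erase hb))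
    rw [Finset.sum_congr rfl h1, Finset.sum_const, Finset.card_erase_of_mem hat,
      (hMt_tri t ht).1]
    norm_num
  have hmatch : IsMatching N (M ∪ Mt) := by
    constructor
    · intro t ht
      rcases Finset.mem_union.mp ht with h | h
      · exact ⟨(hM_match.1 t h).1, (hMsub t h).trans Finset.sdiff_subset⟩
      · exact ⟨(hMt_tri t h).1, (hMt_tri t h).2.1⟩
    · intro t ht s hs hne
      rcases Finset.mem_union.mp ht with h1 | h1 <;> rcases Finset.mem_union.mp hs with h2 | h2
      · exact hM_match.2 t h1 s h2 hne
      · exact Finset.disjoint_left.mpr fun a hat has =>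
          (Finset.mem_sdiff.mp (hMsub t h1 hat)).2 (hsubMt s h2 has)
      · exact Finset.disjoint_left.mpr fun a hat has =>
          (Finset.mem_sdiff.mp (hMsub s h2 has)).2 (hsubMt t h1 hat)
      · exact hMt_disj t h1 s h2 hne
  have hpos : ∀ a : A, (∃ t ∈ M ∪ Mt, a ∈ t) → 0 < utility val (M ∪ Mt) a := by
    rintro a ⟨t, ht, hat⟩
    rcases Finset.mem_union.mp ht with h | h
    · have ha : a ∉ Mt.biUnion id := (Finset.mem_sdiff.mp (hMsub t h hat)).2
      rw [hutil_eq a ha]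
      exact hM_pos a ⟨t, h, hat⟩
    · rw [hutil_tri a t h hat]; norm_num
  refine ⟨⟨hmatch, hpos⟩, ?_⟩
  intro x y z hblk
  obtain ⟨hxN, hyN, hzN, hxy, hxz, hyz, hux, huy, huz⟩ := hblk
  have hval_le : ∀ a b, a ∈ N → b ∈ N → a ≠ b → val a b ≤ 1 := by
    intro a b ha hb hab
    rcases hbs.1 a ha b hb hab with h | h <;> omega
  have hnot : ∀ a b c, a ∈ N → b ∈ N → c ∈ N → a ≠ b → a ≠ c →
      utility val (M ∪ Mt) a < val a b + val a c → a ∉ Mt.biUnion id := by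
    intro a b c ha hb hc hab hac hu hmem
    obtain ⟨t, ht, hat⟩ := Finset.mem_biUnion.mp hmem
    rw [hutil_tri a t ht hat] at hu
    have h1 := hval_le a b ha hb hab
    have h2 := hval_le a c ha hc hac
    omega
  have hx' := hnot x y z hxN hyN hzN hxy hxz hux
  have hy' := hnot y x z hyN hxN hzN (Ne.symm hxy) hyz huy
  have hz' := hnot z x y hzN hxN hyN (Ne.symm hxz) (Ne.symm hyz) huz
  exact hMst x y z ⟨Finset.mem_sdiff.mpr ⟨hxN, hx'⟩, Finset.mem_sdiff.mpr ⟨hyN, hy'⟩,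
    Finset.mem_sdiff.mpr ⟨hzN, hz'⟩, hxy, hxz, hyz,
    hutil_eq x hx' ▸ hux, hutil_eq y hy' ▸ huy, hutil_eq z hz' ▸ huz⟩
end

section
/- Let (N,V) be a triangle-free instance of 3D-SR-SAS-BIN, let α_i ∈ N, and let M be a stable P-matching in the sub-instance induced on N ∖ {α_i}. If there exist distinct agents α_{l1}, α_{l2} ∈ N ∖ {α_i} with u_{α_{l1}}(M) = u_{α_{l2}}(M) = 0 and val_{α_i}(α_{l1}) = val_{α_i}(α_{l2}) = 1, then M ∪ {{α_i, α_{l1}, α_{l2}}} is a stable P-matching in (N,V). -/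
open Finset

variable {A : Type*}

/-- First branch of algorithm `findStableInTriangleFree`: if `M` is a stable `P`-matching
on `N \ {i}` and there are two distinct agents `l₁, l₂` of utility `0` in `M` with
`val i l₁ = val i l₂ = 1`, then `M ∪ {{i, l₁, l₂}}` is a stable `P`-matching on `N`. -/
theorem insert_triple_stable_pmatching [DecidableEq A]
    (N : Finset A) (val : A → A → ℤ)
    (hbs : BinSym N val) (htf : TriangleFree N val)
    (i : A) (hi : i ∈ N) (M : Finset (Finset A))
    (hM : IsPMatching (N.erase i) val M) (hMst : IsStable (N.erase i) val M)
    (l1 l2 : A) (hl1 : l1 ∈ N.erase i) (hl2 : l2 ∈ N.erase i) (hne : l1 ≠ l2)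
    (hu1 : utility val M l1 = 0) (hu2 : utility val M l2 = 0)
    (hv1 : val i l1 = 1) (hv2 : val i l2 = 1) :
    IsPMatching N val (insert ({i, l1, l2} : Finset A) M) ∧
    IsStable N val (insert ({i, l1, l2} : Finset A) M) := by
  obtain ⟨⟨hMcard, hMdisj⟩, hMpos⟩ := hM
  obtain ⟨hbin, hsym⟩ := hbs
  obtain ⟨h1i, hl1N⟩ := Finset.mem_erase.mp hl1
  obtain ⟨h2i, hl2N⟩ := Finset.mem_erase.mp hl2
  set T : Finset A := {i, l1, l2} with hT
  have hil1 : i ≠ l1 := h1i.symm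
  have hil2 : i ≠ l2 := h2i.symm
  have hvl12 : val l1 l2 = 0 := by
    rcases hbin l1 hl1N l2 hl2N hne with h | h
    · exact h
    · exact absurd ⟨hi, hl1N, hl2N, hil1, hil2, hne, hv1, h, hv2⟩ (htf i l1 l2)
  have hsym1 : val l1 i = 1 := by rw [hsym l1 hl1N i hi]; exact hv1
  have hsym2 : val l2 i = 1 := by rw [hsym l2 hl2N i hi]; exact hv2
  have hsym12 : val l2 l1 = 0 := by rw [hsym l2 hl2N l1 hl1N]; exact hvl12
  have hiM : ∀ t ∈ M, i ∉ t := fun t ht hit =>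
    (Finset.mem_erase.mp ((hMcard t ht).2 hit)).1 rfl
  have hl1M : ∀ t ∈ M, l1 ∉ t := by
    intro t ht h
    have := hMpos l1 ⟨t, ht, h⟩
    omega
  have hl2M : ∀ t ∈ M, l2 ∉ t := by
    intro t ht h
    have := hMpos l2 ⟨t, ht, h⟩
    omega
  have hiT : i ∈ T := by simp [hT]
  have hl1T : l1 ∈ T := by simp [hT]
  have hl2T : l2 ∈ T := by simp [hT]
  have hTmem : ∀ a ∈ T, a = i ∨ a = l1 ∨ a = l2 := by
    intro a ha; simpa [hT] using ha
  have hTnot : ∀ a ∈ T, ∀ t ∈ M, a ∉ t := by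
    intro a ha t ht
    rcases hTmem a ha with rfl | rfl | rfl
    exacts [hiM t ht, hl1M t ht, hl2M t ht]
  have key : ∀ a ∈ T, utility val (insert T M) a = ∑ b ∈ T.erase a, val a b := by
    intro a ha
    unfold utility
    rw [Finset.filter_insert, if_pos ha,
      Finset.filter_false_of_mem (fun t ht => hTnot a ha t ht),
      Finset.sum_insert (Finset.notMem_empty _), Finset.sum_empty, add_zero]
  have huM0 : ∀ a ∉ T, utility val (insert T M) a = utility val M a := by
    intro a ha
    unfold utility
    rw [Finset.filter_insert, if_neg ha]
  have hei : T.erase i = {l1, l2} := by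
    rw [hT]; exact Finset.erase_insert (by simp [hil1, hil2])
  have hei1 : T.erase l1 = {i, l2} := by
    ext x
    simp only [hT, Finset.mem_erase, Finset.mem_insert, Finset.mem_singleton]
    constructor
    · rintro ⟨hx, rfl | rfl | rfl⟩
      · exact Or.inl rfl
      · exact absurd rfl hx
      · exact Or.inr rfl
    · rintro (rfl | rfl)
      · exact ⟨hil1, Or.inl rfl⟩
      · exact ⟨hne.symm, Or.inr (Or.inr rfl)⟩
  have hei2 : T.erase l2 = {i, l1} := by
    ext x
    simp only [hT, Finset.mem_erase, Finset.mem_insert, Finset.mem_singleton]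
    constructor
    · rintro ⟨hx, rfl | rfl | rfl⟩
      · exact Or.inl rfl
      · exact Or.inr rfl
      · exact absurd rfl hx
    · rintro (rfl | rfl)
      · exact ⟨hil2, Or.inl rfl⟩
      · exact ⟨hne, Or.inr (Or.inl rfl)⟩
  have hui : utility val (insert T M) i = 2 := by
    rw [key i hiT, hei, Finset.sum_pair hne, hv1, hv2]; norm_num
  have hul1 : utility val (insert T M) l1 = 1 := by
    rw [key l1 hl1T, hei1, Finset.sum_pair hil2, hsym1, hvl12]; norm_num
  have hul2 : utility val (insert T M) l2 = 1 := by
    rw [key l2 hl2T, hei2, Finset.sum_pair hil1, hsym2, hsym12]; norm_num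
  have huMi : utility val M i = 0 := by
    unfold utility
    rw [Finset.filter_false_of_mem (fun t ht => hiM t ht), Finset.sum_empty]
  have hmono : ∀ a, utility val M a ≤ utility val (insert T M) a := by
    intro a
    by_cases ha : a ∈ T
    · rcases hTmem a ha with rfl | rfl | rfl
      · rw [hui, huMi]; norm_num
      · rw [hul1, hu1]; norm_num
      · rw [hul2, hu2]; norm_num
    · rw [huM0 a ha]
  have hvle : ∀ a ∈ N, ∀ b ∈ N, a ≠ b → val a b ≤ 1 := by
    intro a ha b hb h
    rcases hbin a ha b hb h with h' | h' <;> omega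
  constructor
  · constructor
    · constructor
      · intro t ht
        rcases Finset.mem_insert.mp ht with rfl | ht
        · constructor
          · rw [hT, Finset.card_insert_of_notMem (by simp [hil1, hil2]),
              Finset.card_insert_of_notMem (by simp [hne]), Finset.card_singleton]
          · simp [hT, Finset.insert_subset_iff, hi, hl1N, hl2N]
        · exact ⟨(hMcard t ht).1, (hMcard t ht).2.trans (Finset.erase_subset _ _)⟩
      · intro t ht s hs hts
        have hdTM : ∀ s ∈ M, Disjoint T s := by
          intro s hs
          refine Finset.disjoint_left.mpr ?_
          intro x hx hxs
          exact hTnot x hx s hs hxs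
        rcases Finset.mem_insert.mp ht with rfl | ht <;>
          rcases Finset.mem_insert.mp hs with rfl | hs
        · exact absurd rfl hts
        · exact hdTM s hs
        · exact (hdTM t ht).symm
        · exact hMdisj t ht s hs hts
    · rintro a ⟨t, ht, hat⟩
      by_cases ha : a ∈ T
      · rcases hTmem a ha with rfl | rfl | rfl
        · rw [hui]; norm_num
        · rw [hul1]; norm_num
        · rw [hul2]; norm_num
      · rw [huM0 a ha]
        rcases Finset.mem_insert.mp ht with rfl | ht
        · exact absurd hat ha
        · exact hMpos a ⟨t, ht, hat⟩
  · rintro x y z ⟨hxN, hyN, hzN, hxy, hxz, hyz, hux, huy, huz⟩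
    have hxne : x ≠ i := by
      intro hxi
      rw [hxi] at hux hxy hxz
      have h1 := hvle i hi y hyN hxy
      have h2 := hvle i hi z hzN hxz
      rw [hui] at hux; omega
    have hyne : y ≠ i := by
      intro hyi
      rw [hyi] at huy hxy hyz
      have h1 := hvle i hi x hxN hxy.symm
      have h2 := hvle i hi z hzN hyz
      rw [hui] at huy; omega
    have hzne : z ≠ i := by
      intro hzi
      rw [hzi] at huz hxz hyz
      have h1 := hvle i hi x hxN hxz.symm
      have h2 := hvle i hi y hyN hyz.symm
      rw [hui] at huz; omega
    exact hMst x y z ⟨Finset.mem_erase.mpr ⟨hxne, hxN⟩,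
      Finset.mem_erase.mpr ⟨hyne, hyN⟩, Finset.mem_erase.mpr ⟨hzne, hzN⟩,
      hxy, hxz, hyz, lt_of_le_of_lt (hmono x) hux,
      lt_of_le_of_lt (hmono y) huy, lt_of_le_of_lt (hmono z) huz⟩
end

section
/- Let (N,V) be a triangle-free instance of 3D-SR-SAS-BIN, let α_i ∈ N, and let M be a stable P-matching in the sub-instance induced on N ∖ {α_i}. Suppose that: (i) there exist no distinct α_{l1}, α_{l2} ∈ N ∖ {α_i} with u_{α_{l1}}(M) = u_{α_{l2}}(M) = 0 and val_{α_i}(α_{l1}) = val_{α_i}(α_{l2}) = 1; (ii) there exist no distinct α_{l3}, α_{l4} ∈ N ∖ {α_i} with u_{α_{l3}}(M) = u_{α_{l4}}(M) = 0, val_{α_i}(α_{l3}) = 1 and val_{α_{l3}}(α_{l4}) = 1; and (iii) there exist no distinct α_{l5}, α_{l6} ∈ N ∖ {α_i} with u_{α_{l5}}(M) = 1, u_{α_{l6}}(M) = 0, val_{α_i}(α_{l5}) = 1 and val_{α_{l5}}(α_{l6}) = 1. Then M is a stable P-matching in (N,V). -/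
open Finset

variable {A : Type*}

/-- Last branch of algorithm `findStableInTriangleFree`: if `M` is a stable `P`-matching
on `N \ {i}` and none of the three configurations of agents described in the algorithm
exists, then `M` itself is a stable `P`-matching on `N`. -/
theorem stable_pmatching_extends [DecidableEq A]
    (N : Finset A) (val : A → A → ℤ)
    (hbs : BinSym N val) (htf : TriangleFree N val)
    (i : A) (hi : i ∈ N) (M : Finset (Finset A))
    (hM : IsPMatching (N.erase i) val M) (hMst : IsStable (N.erase i) val M)
    (h1 : ¬ ∃ l1 ∈ N.erase i, ∃ l2 ∈ N.erase i, l1 ≠ l2 ∧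
      utility val M l1 = 0 ∧ utility val M l2 = 0 ∧ val i l1 = 1 ∧ val i l2 = 1)
    (h2 : ¬ ∃ l3 ∈ N.erase i, ∃ l4 ∈ N.erase i, l3 ≠ l4 ∧
      utility val M l3 = 0 ∧ utility val M l4 = 0 ∧ val i l3 = 1 ∧ val l3 l4 = 1)
    (h3 : ¬ ∃ l5 ∈ N.erase i, ∃ l6 ∈ N.erase i, l5 ≠ l6 ∧
      utility val M l5 = 1 ∧ utility val M l6 = 0 ∧ val i l5 = 1 ∧ val l5 l6 = 1) :
    IsPMatching N val M ∧ IsStable N val M := by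
  have util_zero : ∀ a : A, (¬ ∃ t ∈ M, a ∈ t) → utility val M a = 0 := by
    intro a h
    unfold utility
    rw [Finset.filter_false_of_mem, Finset.sum_empty]
    intro t ht hat
    exact h ⟨t, ht, hat⟩
  obtain ⟨hbin, hsym⟩ := hbs
  obtain ⟨⟨hMtriples, hMdisj⟩, hMpos⟩ := hM
  have hiu : utility val M i = 0 := by
    apply util_zero
    rintro ⟨t, htM, hit⟩
    exact (Finset.mem_erase.mp ((hMtriples t htM).2 hit)).1 rfl
  have hnonneg : ∀ a : A, 0 ≤ utility val M a := by
    intro a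
    by_cases h : ∃ t ∈ M, a ∈ t
    · exact le_of_lt (hMpos a h)
    · rw [util_zero a h]
  -- helper for the case va = 1, vb = 0
  have key1 : ∀ a b : A, a ∈ N.erase i → b ∈ N.erase i → a ≠ b →
      val i a = 1 → val i b = 0 →
      utility val M a < val i a + val a b →
      utility val M b < val i b + val b a → False := by
    intro a b ha hb hab hva hvb hua hub
    have haN : a ∈ N := Finset.mem_of_mem_erase ha
    have hbN : b ∈ N := Finset.mem_of_mem_erase hb
    have hvab : val a b = 0 ∨ val a b = 1 := hbin a haN b hbN hab
    have hsab : val b a = val a b := hsym b hbN a haN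
    have hub' := hub
    rw [hvb, hsab] at hub'
    have hubnn := hnonneg b
    have huann := hnonneg a
    have hvab1 : val a b = 1 := by omega
    have hub0 : utility val M b = 0 := by omega
    rw [hva, hvab1] at hua
    have : utility val M a = 0 ∨ utility val M a = 1 := by omega
    rcases this with h0 | h1
    · exact h2 ⟨a, ha, b, hb, hab, h0, hub0, hva, hvab1⟩
    · exact h3 ⟨a, ha, b, hb, hab, h1, hub0, hva, hvab1⟩
  have key : ∀ a b : A, a ∈ N.erase i → b ∈ N.erase i → a ≠ b →
      (0 : ℤ) < val i a + val i b →
      utility val M a < val i a + val a b →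
      utility val M b < val i b + val b a → False := by
    intro a b ha hb hab hpos hua hub
    have haN : a ∈ N := Finset.mem_of_mem_erase ha
    have hbN : b ∈ N := Finset.mem_of_mem_erase hb
    have hai : a ≠ i := (Finset.mem_erase.mp ha).1
    have hbi : b ≠ i := (Finset.mem_erase.mp hb).1
    have hva : val i a = 0 ∨ val i a = 1 := hbin i hi a haN (Ne.symm hai)
    have hvb : val i b = 0 ∨ val i b = 1 := hbin i hi b hbN (Ne.symm hbi)
    rcases hva with hva | hva
    · rcases hvb with hvb | hvb
      · omega
      · exact key1 b a hb ha (Ne.symm hab) hvb hva hub hua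
    · rcases hvb with hvb | hvb
      · exact key1 a b ha hb hab hva hvb hua hub
      · -- both valued 1 by i : triangle-free forces val a b = 0
        have hvab : val a b = 0 ∨ val a b = 1 := hbin a haN b hbN hab
        have hvab0 : val a b = 0 := by
          rcases hvab with h | h
          · exact h
          · exact absurd ⟨hi, haN, hbN, Ne.symm hai, Ne.symm hbi, hab, hva, h, hvb⟩
              (htf i a b)
        have hsab : val b a = val a b := hsym b hbN a haN
        rw [hva, hvab0] at hua
        rw [hvb, hsab, hvab0] at hub
        have hua0 : utility val M a = 0 := le_antisymm (by omega) (hnonneg a)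
        have hub0 : utility val M b = 0 := le_antisymm (by omega) (hnonneg b)
        exact h1 ⟨a, ha, b, hb, hab, hua0, hub0, hva, hvb⟩
  constructor
  · exact ⟨⟨fun t ht => ⟨(hMtriples t ht).1,
      (hMtriples t ht).2.trans (Finset.erase_subset i N)⟩, hMdisj⟩, hMpos⟩
  · intro x y z hblk
    obtain ⟨hx, hy, hz, hxy, hxz, hyz, hux, huy, huz⟩ := hblk
    by_cases hxi : x = i
    · subst hxi
      rw [hiu] at hux
      have hyE : y ∈ N.erase x := Finset.mem_erase.mpr ⟨Ne.symm hxy, hy⟩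
      have hzE : z ∈ N.erase x := Finset.mem_erase.mpr ⟨Ne.symm hxz, hz⟩
      refine key y z hyE hzE hyz hux ?_ ?_
      · rwa [hsym y hy x hx] at huy
      · rwa [hsym z hz x hx] at huz
    · by_cases hyi : y = i
      · subst hyi
        rw [hiu] at huy
        have hxE : x ∈ N.erase y := Finset.mem_erase.mpr ⟨hxy, hx⟩
        have hzE : z ∈ N.erase y := Finset.mem_erase.mpr ⟨Ne.symm hyz, hz⟩
        refine key x z hxE hzE hxz huy ?_ ?_
        · rwa [hsym x hx y hy] at hux
        · rwa [hsym z hz y hy, add_comm] at huz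
      · by_cases hzi : z = i
        · subst hzi
          rw [hiu] at huz
          have hxE : x ∈ N.erase z := Finset.mem_erase.mpr ⟨hxz, hx⟩
          have hyE : y ∈ N.erase z := Finset.mem_erase.mpr ⟨hyz, hy⟩
          refine key x y hxE hyE hxy huz ?_ ?_
          · rwa [hsym x hx z hz, add_comm] at hux
          · rwa [hsym y hy z hz, add_comm] at huy
        · exact hMst x y z ⟨Finset.mem_erase.mpr ⟨hxi, hx⟩,
            Finset.mem_erase.mpr ⟨hyi, hy⟩, Finset.mem_erase.mpr ⟨hzi, hz⟩,
            hxy, hxz, hyz, hux, huy, huz⟩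
end

section
/- Let G=(W,E) be a simple undirected graph with |W| = 3q, and let (N,V) be the instance of 3D-SR-SAS-BIN with N = W and val_{w_i}(w_j) = 1 if {w_i,w_j} ∈ E and val_{w_i}(w_j) = 0 otherwise. Then G has a partition into triangles if and only if (N,V) contains a stable matching M with utilitarian welfare u(M) = 2|N|. -/
open Finset

variable {A : Type*}

lemma aux_filter_eq [DecidableEq A] {N : Finset A} {M : Finset (Finset A)}
    (hM : IsMatching N M) {t : Finset A} (ht : t ∈ M) {a : A} (ha : a ∈ t) :
    M.filter (fun s => a ∈ s) = {t} := by
  ext s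
  simp only [Finset.mem_filter, Finset.mem_singleton]
  constructor
  · rintro ⟨hs, has⟩
    by_contra hne
    exact (Finset.disjoint_left.1 (hM.2 s hs t ht hne)) has ha
  · rintro rfl; exact ⟨ht, ha⟩

lemma aux_utility_eq [DecidableEq A] {N : Finset A} {M : Finset (Finset A)}
    (hM : IsMatching N M) {t : Finset A} (ht : t ∈ M) {a : A} (ha : a ∈ t)
    {val : A → A → ℤ} :
    utility val M a = ∑ b ∈ t.erase a, val a b := by
  rw [utility, aux_filter_eq hM ht ha, Finset.sum_singleton]

lemma aux_all_one [DecidableEq A] {s : Finset A} {f : A → ℤ}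
    (h1 : ∀ b ∈ s, f b ≤ 1) (hsum : ∑ b ∈ s, f b = (s.card : ℤ))
    {b : A} (hb : b ∈ s) : f b = 1 := by
  have h2 : ∑ c ∈ s.erase b, f c ≤ ((s.erase b).card : ℤ) := by
    calc ∑ c ∈ s.erase b, f c ≤ ∑ _c ∈ s.erase b, (1:ℤ) :=
          Finset.sum_le_sum (fun c hc => h1 c (Finset.mem_of_mem_erase hc))
      _ = ((s.erase b).card : ℤ) := by simp
  have h3 : f b + ∑ c ∈ s.erase b, f c = ∑ c ∈ s, f c := Finset.add_sum_erase s f hb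
  have h4 : (s.erase b).card = s.card - 1 := Finset.card_erase_of_mem hb
  have h5 : 0 < s.card := Finset.card_pos.2 ⟨b, hb⟩
  have h6 := h1 b hb
  omega

/-- `G` (on `3q` vertices) has a partition into triangles iff the binary symmetric
instance whose valuations are the adjacency indicator of `G` contains a stable matching
with utilitarian welfare `2|N|`. -/
theorem trianglePartition_iff_stable_matching_max_welfare
    (q : ℕ) (G : SimpleGraph (Fin (3*q))) [DecidableRel G.Adj] :
    (∃ X, IsTrianglePartition G X) ↔
    ∃ M : Finset (Finset (Fin (3*q))),
      IsMatching (Finset.univ : Finset (Fin (3*q))) M ∧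
      IsStable Finset.univ (fun a b => if G.Adj a b then 1 else 0) M ∧
      ∑ a : Fin (3*q), utility (fun a b => if G.Adj a b then 1 else 0) M a
        = 2 * (3 * q : ℤ) := by
  set val : Fin (3*q) → Fin (3*q) → ℤ := fun a b => if G.Adj a b then 1 else 0 with hval
  have hval_le : ∀ a b, val a b ≤ 1 := by
    intro a b; simp only [hval]; split_ifs <;> norm_num
  constructor
  · rintro ⟨X, hX1, hX2, hX3⟩
    have hM : IsMatching (Finset.univ : Finset (Fin (3*q))) X :=
      ⟨fun t ht => ⟨(hX1 t ht).1, t.subset_univ⟩, hX2⟩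
    have hu : ∀ a, utility val X a = 2 := by
      intro a
      obtain ⟨t, ht, hat⟩ := hX3 a
      rw [aux_utility_eq hM ht hat]
      have h1 : ∀ b ∈ t.erase a, val a b = 1 := by
        intro b hb
        have hbt := Finset.mem_of_mem_erase hb
        have hba : b ≠ a := Finset.ne_of_mem_erase hb
        simp only [hval, if_pos ((hX1 t ht).2 a hat b hbt (Ne.symm hba))]
      rw [Finset.sum_congr rfl h1, Finset.sum_const,
        Finset.card_erase_of_mem hat, (hX1 t ht).1]
      norm_num
    refine ⟨X, hM, ?_, ?_⟩
    · intro x y z hb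
      have := hb.2.2.2.2.2.2.1
      rw [hu x] at this
      have h1 := hval_le x y
      have h2 := hval_le x z
      omega
    · rw [Finset.sum_congr rfl (fun a _ => hu a), Finset.sum_const,
        Finset.card_univ, Fintype.card_fin]
      push_cast; ring
  · rintro ⟨M, hM, _, hsum⟩
    have hub : ∀ a, utility val M a ≤ 2 := by
      intro a
      by_cases h : ∃ t ∈ M, a ∈ t
      · obtain ⟨t, ht, hat⟩ := h
        rw [aux_utility_eq hM ht hat]
        calc ∑ b ∈ t.erase a, val a b ≤ ∑ _b ∈ t.erase a, (1:ℤ) :=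
              Finset.sum_le_sum (fun b _ => hval_le a b)
          _ = 2 := by
              rw [Finset.sum_const, Finset.card_erase_of_mem hat, (hM.1 t ht).1]
              norm_num
      · push_neg at h
        rw [utility, Finset.filter_eq_empty_iff.2 (fun t ht => h t ht), Finset.sum_empty]
        norm_num
    have hu : ∀ a, utility val M a = 2 := by
      by_contra h
      push_neg at h
      obtain ⟨a, ha⟩ := h
      have hlt := Finset.sum_lt_sum (fun i (_ : i ∈ Finset.univ) => hub i)
        ⟨a, Finset.mem_univ a, lt_of_le_of_ne (hub a) ha⟩
      rw [hsum, Finset.sum_const, Finset.card_univ, Fintype.card_fin,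
        nsmul_eq_mul] at hlt
      push_cast at hlt
      omega
    have hkey : ∀ t ∈ M, ∀ a ∈ t, ∀ b ∈ t.erase a, val a b = 1 := by
      intro t ht a hat b hb
      have h2 : ∑ c ∈ t.erase a, val a c = ((t.erase a).card : ℤ) := by
        rw [← aux_utility_eq hM ht hat, hu a,
          Finset.card_erase_of_mem hat, (hM.1 t ht).1]
        norm_num
      exact aux_all_one (fun c _ => hval_le a c) h2 hb
    refine ⟨M, ?_, hM.2, ?_⟩
    · intro t ht
      refine ⟨(hM.1 t ht).1, ?_⟩
      intro u hu' v hv' huv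
      have := hkey t ht u hu' v (Finset.mem_erase.2 ⟨Ne.symm huv, hv'⟩)
      simp only [hval] at this
      by_contra hadj
      rw [if_neg hadj] at this
      norm_num at this
    · intro v
      by_contra h
      push_neg at h
      have : utility val M v = 0 := by
        rw [utility, Finset.filter_eq_empty_iff.2 (fun t ht => h t ht), Finset.sum_empty]
      rw [hu v] at this
      norm_num at this
end

section
/- Let (N,V) be an instance of 3D-SR-SAS-BIN and let M_A be a stable matching in (N,V) such that for all distinct agents α, β with val_α(β) = 1 we have u_α(M_A) + u_β(M_A) ≥ 1. Then for any three distinct agents h1, h2, h3 with val_{h1}(h2) = val_{h2}(h3) = val_{h3}(h1) = 1 (a triangle), u_{h1}(M_A) + u_{h2}(M_A) + u_{h3}(M_A) ≥ 3. -/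
open Finset

variable {A : Type*}

/-- If `M_A` is a stable matching of a binary symmetric instance such that any two distinct
agents valuing each other `1` have total utility at least `1`, then the three agents of any
triangle have total utility at least `3` in `M_A`. -/
theorem triangle_total_utility_ge_three [DecidableEq A]
    (N : Finset A) (val : A → A → ℤ) (hbs : BinSym N val)
    (MA : Finset (Finset A)) (hMA : IsMatching N MA) (hst : IsStable N val MA)
    (hprop : ∀ a ∈ N, ∀ b ∈ N, a ≠ b → val a b = 1 →
      1 ≤ utility val MA a + utility val MA b)
    (h1 h2 h3 : A) (hh1 : h1 ∈ N) (hh2 : h2 ∈ N) (hh3 : h3 ∈ N)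
    (hne12 : h1 ≠ h2) (hne13 : h1 ≠ h3) (hne23 : h2 ≠ h3)
    (hv12 : val h1 h2 = 1) (hv23 : val h2 h3 = 1) (hv31 : val h3 h1 = 1) :
    3 ≤ utility val MA h1 + utility val MA h2 + utility val MA h3 := by
  have hnn : ∀ a ∈ N, 0 ≤ utility val MA a := by
    intro a ha
    apply Finset.sum_nonneg
    intro t ht
    rw [Finset.mem_filter] at ht
    apply Finset.sum_nonneg
    intro b hb
    have hbt : b ∈ t := Finset.mem_of_mem_erase hb
    have hbN : b ∈ N := (hMA.1 t ht.1).2 hbt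
    have hba : a ≠ b := (Finset.ne_of_mem_erase hb).symm
    rcases hbs.1 a ha b hbN hba with h | h <;> simp [h]
  have hv13 : val h1 h3 = 1 := by rw [hbs.2 h1 hh1 h3 hh3]; exact hv31
  have hv21 : val h2 h1 = 1 := by rw [hbs.2 h2 hh2 h1 hh1]; exact hv12
  have hv32 : val h3 h2 = 1 := by rw [hbs.2 h3 hh3 h2 hh2]; exact hv23
  have hb := hst h1 h2 h3
  unfold Blocks at hb
  push_neg at hb
  have key := hb hh1 hh2 hh3 hne12 hne13 hne23
  rw [hv12, hv13, hv21, hv23, hv31, hv32] at key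
  by_cases c1 : utility val MA h1 < 1 + 1
  · by_cases c2 : utility val MA h2 < 1 + 1
    · have c3 := key c1 c2
      have := hprop h1 hh1 h2 hh2 hne12 hv12
      linarith
    · have := hprop h3 hh3 h1 hh1 hne13.symm hv31
      linarith
  · have := hprop h2 hh2 h3 hh3 hne23 hv23
    linarith
end

section
/- Let (N,V) be an instance of 3D-SR-SAS-BIN and let M_A be a stable matching in (N,V) such that for all distinct agents α, β with val_α(β) = 1 we have u_α(M_A) + u_β(M_A) ≥ 1. Then for any three distinct agents h1, h2, h3 with val_{h1}(h2) = val_{h2}(h3) = 1 and val_{h1}(h3) = 0, u_{h1}(M_A) + u_{h2}(M_A) + u_{h3}(M_A) ≥ 2. -/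
open Finset

variable {A : Type*}

lemma utility_nonneg_of [DecidableEq A] (N : Finset A) (val : A → A → ℤ)
    (hbs : BinSym N val) (M : Finset (Finset A)) (hM : IsMatching N M) (a : A) :
    0 ≤ utility val M a := by
  apply Finset.sum_nonneg
  intro t ht
  rw [Finset.mem_filter] at ht
  apply Finset.sum_nonneg
  intro b hb
  have hbt := Finset.mem_of_mem_erase hb
  have hba : b ≠ a := Finset.ne_of_mem_erase hb
  have htN := (hM.1 t ht.1).2
  have haN : a ∈ N := htN ht.2
  have hbN : b ∈ N := htN hbt
  rcases hbs.1 a haN b hbN (Ne.symm hba) with h | h <;> omega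

/-- If `M_A` is a stable matching of a binary symmetric instance such that any two distinct
agents valuing each other `1` have total utility at least `1`, then the three agents of any
path (`val h1 h2 = val h2 h3 = 1`, `val h1 h3 = 0`) have total utility at least `2`
in `M_A`. -/
theorem path_total_utility_ge_two [DecidableEq A]
    (N : Finset A) (val : A → A → ℤ) (hbs : BinSym N val)
    (MA : Finset (Finset A)) (hMA : IsMatching N MA) (hst : IsStable N val MA)
    (hprop : ∀ a ∈ N, ∀ b ∈ N, a ≠ b → val a b = 1 →
      1 ≤ utility val MA a + utility val MA b)
    (h1 h2 h3 : A) (hh1 : h1 ∈ N) (hh2 : h2 ∈ N) (hh3 : h3 ∈ N)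
    (hne12 : h1 ≠ h2) (hne13 : h1 ≠ h3) (hne23 : h2 ≠ h3)
    (hv12 : val h1 h2 = 1) (hv23 : val h2 h3 = 1) (hv13 : val h1 h3 = 0) :
    2 ≤ utility val MA h1 + utility val MA h2 + utility val MA h3 := by
  have hu1 := utility_nonneg_of N val hbs MA hMA h1
  have hu2 := utility_nonneg_of N val hbs MA hMA h2
  have hu3 := utility_nonneg_of N val hbs MA hMA h3
  have h12 := hprop h1 hh1 h2 hh2 hne12 hv12
  have h23 := hprop h2 hh2 h3 hh3 hne23 hv23
  by_contra hcon
  push_neg at hcon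
  have hsym21 : val h2 h1 = 1 := by rw [hbs.2 h2 hh2 h1 hh1]; exact hv12
  have hsym31 : val h3 h1 = 0 := by rw [hbs.2 h3 hh3 h1 hh1]; exact hv13
  have hsym32 : val h3 h2 = 1 := by rw [hbs.2 h3 hh3 h2 hh2]; exact hv23
  exact hst h1 h2 h3 ⟨hh1, hh2, hh3, hne12, hne13, hne23,
    by rw [hv12, hv13]; omega,
    by rw [hsym21, hv23]; omega,
    by rw [hsym31, hsym32]; omega⟩
end
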